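/- Let K, S, C, B be real 3×3 matrices such that the block matrix A = [[K,S],[C,B]] is positive definite, let m_e, m_c ∈ ℝ and r ∈ ℝ³. Then there exist λ ∈ ℝ, a unit vector g ∈ ℝ³, and ξ ∈ ℝ³ solving the system K ξ + λ S g = m_e g and C ξ + λ B g = − m_c (r × g). -/

import Mathlib

open Matrix Polynomial Filter

lemma exists_root_of_monic_odd (P : Polynomial ℝ) (hm : P.Monic) (ho : Odd P.natDegree) :
    ∃ x : ℝ, P.eval x = 0 := by
  have hdeg : 0 < P.natDegree := ho.pos
  have hdeg' : 0 < P.degree := natDegree_pos_iff_degree_pos.mp hdeg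
  have h1 : Tendsto (fun x => P.eval x) atTop atTop :=
    P.tendsto_atTop_of_leadingCoeff_nonneg hdeg' (by simp [hm.leadingCoeff])
  set Q := P.comp (-X) with hQ
  have hndX : (-X : Polynomial ℝ).natDegree = 1 := by simp
  have hQdeg : Q.natDegree = P.natDegree := by
    rw [hQ, natDegree_comp, hndX, mul_one]
  have hQlc : Q.leadingCoeff = -1 := by
    rw [hQ, leadingCoeff_comp (by rw [hndX]; norm_num), hm.leadingCoeff]
    simp [leadingCoeff, ho.neg_one_pow]
  have h2 : Tendsto (fun x => Q.eval x) atTop atBot :=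
    Q.tendsto_atBot_of_leadingCoeff_nonpos
      (natDegree_pos_iff_degree_pos.mp (hQdeg ▸ hdeg)) (by rw [hQlc]; norm_num)
  obtain ⟨a, ha⟩ := (h2.eventually (eventually_le_atBot (-1 : ℝ))).exists
  obtain ⟨b, hb⟩ := (h1.eventually (eventually_ge_atTop (1 : ℝ))).exists
  have ha' : P.eval (-a) ≤ -1 := by
    rwa [hQ, eval_comp, eval_neg, eval_X] at ha
  have hmem : (0 : ℝ) ∈ Set.uIcc (P.eval (-a)) (P.eval b) :=
    Set.mem_uIcc.mpr (Or.inl ⟨by linarith, by linarith⟩)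
  obtain ⟨x, _, hx⟩ := intermediate_value_uIcc (P.continuous.continuousOn
    (s := Set.uIcc (-a) b)) hmem
  exact ⟨x, hx⟩

lemma exists_eigen (F : Matrix (Fin 3) (Fin 3) ℝ) :
    ∃ (t : ℝ) (v : Fin 3 → ℝ), v ≠ 0 ∧ F.mulVec v = t • v := by
  obtain ⟨t, ht⟩ := exists_root_of_monic_odd F.charpoly F.charpoly_monic
    (by rw [Matrix.charpoly_natDegree_eq_dim]; simp; decide)
  have hmap : (charmatrix F).map (Polynomial.evalRingHom t) = t • (1 : Matrix (Fin 3) (Fin 3) ℝ) - F := by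
    ext i j
    by_cases hij : i = j
    · subst hij; simp [charmatrix_apply_eq, Matrix.one_apply]
    · simp [charmatrix_apply_ne _ _ _ hij, Matrix.one_apply, hij]
  have hdet : ((t • (1 : Matrix (Fin 3) (Fin 3) ℝ)) - F).det = 0 := by
    have h := RingHom.map_det (Polynomial.evalRingHom t) (charmatrix F)
    rw [RingHom.mapMatrix_apply, hmap] at h
    rw [← h]
    simpa [Matrix.charpoly] using ht
  obtain ⟨v, hv0, hv⟩ := Matrix.exists_mulVec_eq_zero_iff.mpr hdet
  refine ⟨t, v, hv0, ?_⟩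
  rw [Matrix.sub_mulVec, sub_eq_zero] at hv
  rw [← hv, Matrix.smul_mulVec, Matrix.one_mulVec]

/-- Solvability of the algebraic system governing the steady free fall of a slender
rigid body at low Reynolds number. -/
theorem steady_free_fall_algebraic_system
    (K S C B : Matrix (Fin 3) (Fin 3) ℝ)
    (hA : (Matrix.fromBlocks K S C B).PosDef)
    (m_e m_c : ℝ) (r : Fin 3 → ℝ) :
    ∃ (l : ℝ) (g ξ : Fin 3 → ℝ), g ⬝ᵥ g = 1 ∧
      K.mulVec ξ + l • S.mulVec g = m_e • g ∧
      C.mulVec ξ + l • B.mulVec g = -(m_c • crossProduct r g) := by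
  have hH := hA.1
  rw [Matrix.isHermitian_fromBlocks_iff] at hH
  -- K is positive definite
  have hK : K.PosDef := by
    refine Matrix.PosDef.of_dotProduct_mulVec_pos hH.1 (fun x hx => ?_)
    have hxe : (Sum.elim x 0 : Fin 3 ⊕ Fin 3 → ℝ) ≠ 0 := by
      intro h; apply hx; funext i; exact congrFun h (Sum.inl i)
    have := hA.dotProduct_mulVec_pos hxe
    simpa [Matrix.fromBlocks_mulVec, sumElim_dotProduct_sumElim] using this
  have hKdet : IsUnit K.det := hK.det_pos.ne'.isUnit
  haveI : Invertible K := K.invertibleOfIsUnitDet hKdet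
  have hSH : Sᴴ = C := hH.2.1
  subst hSH
  set D := B - Sᴴ * K⁻¹ * S with hDdef
  have hSch : D.PosDef := by
    refine Matrix.PosDef.of_dotProduct_mulVec_pos ((Matrix.IsHermitian.fromBlocks₁₁ S B hH.1).mp hA.1) (fun x hx => ?_)
    have hz : (Sum.elim (-((K⁻¹ * S) *ᵥ x)) x : Fin 3 ⊕ Fin 3 → ℝ) ≠ 0 :=
      fun h => hx (funext fun i => congrFun h (Sum.inr i))
    have h0 := hA.dotProduct_mulVec_pos hz
    rw [Matrix.dotProduct_mulVec, Matrix.schur_complement_eq₁₁ S B _ _ hH.1,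
      neg_add_cancel] at h0
    simpa [Matrix.dotProduct_mulVec, hDdef] using h0
  have hDdet : IsUnit D.det := hSch.det_pos.ne'.isUnit
  set M := LinearMap.toMatrix' (crossProduct r) with hMdef
  have hMg : ∀ w, M.mulVec w = crossProduct r w := by
    intro w
    rw [← Matrix.toLin'_apply, hMdef, Matrix.toLin'_toMatrix']
  set N := m_e • (Sᴴ * K⁻¹) + m_c • M with hNdef
  set F := -(D⁻¹ * N) with hFdef
  obtain ⟨t, v, hv0, hv⟩ := exists_eigen F
  have hvv : 0 < v ⬝ᵥ v := by
    rcases lt_or_eq_of_le (Finset.sum_nonneg fun i _ => mul_self_nonneg (v i)) with h | h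
    · exact h
    · exact absurd (dotProduct_self_eq_zero.mp h.symm) hv0
  set c := Real.sqrt (v ⬝ᵥ v) with hc
  have hcpos : 0 < c := Real.sqrt_pos.mpr hvv
  set g := c⁻¹ • v with hg
  have hg1 : g ⬝ᵥ g = 1 := by
    rw [hg, smul_dotProduct, dotProduct_smul, smul_eq_mul, smul_eq_mul,
      ← mul_assoc, ← Real.mul_self_sqrt hvv.le, ← hc]
    field_simp
  have hgF : F.mulVec g = t • g := by
    rw [hg, Matrix.mulVec_smul, hv, smul_comm]
  set ξ := K⁻¹.mulVec (m_e • g - t • S.mulVec g) with hξ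
  have hKK : K * K⁻¹ = 1 := Matrix.mul_nonsing_inv K hKdet
  have hDD : D * D⁻¹ = 1 := Matrix.mul_nonsing_inv D hDdet
  refine ⟨t, g, ξ, hg1, ?_, ?_⟩
  · rw [hξ, Matrix.mulVec_mulVec, hKK, Matrix.one_mulVec, sub_add_cancel]
  · -- key eigen identity: t • D.mulVec g = -(N.mulVec g)
    have hDF : D * F = -N := by
      rw [hFdef, mul_neg, ← mul_assoc, hDD, one_mul]
    have key : t • D.mulVec g = -(N.mulVec g) := by
      calc t • D.mulVec g = D.mulVec (t • g) := (Matrix.mulVec_smul D t g).symm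
        _ = D.mulVec (F.mulVec g) := by rw [hgF]
        _ = (D * F).mulVec g := by rw [Matrix.mulVec_mulVec]
        _ = -(N.mulVec g) := by rw [hDF, Matrix.neg_mulVec]
    have hCξ : Sᴴ.mulVec ξ = m_e • (Sᴴ * K⁻¹).mulVec g - t • (Sᴴ * K⁻¹ * S).mulVec g := by
      rw [hξ, Matrix.mulVec_mulVec, Matrix.mulVec_sub]
      simp only [Matrix.mulVec_smul, Matrix.mulVec_mulVec]
    have hNg : N.mulVec g = m_e • (Sᴴ * K⁻¹).mulVec g + m_c • M.mulVec g := by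
      rw [hNdef, Matrix.add_mulVec, Matrix.smul_mulVec, Matrix.smul_mulVec]
    have hDg : D.mulVec g = B.mulVec g - (Sᴴ * K⁻¹ * S).mulVec g := by
      rw [hDdef, Matrix.sub_mulVec]
    rw [hCξ]
    have h2 : t • B.mulVec g - t • (Sᴴ * K⁻¹ * S).mulVec g
        = -(m_e • (Sᴴ * K⁻¹).mulVec g + m_c • crossProduct r g) := by
      rw [← smul_sub, ← hDg, key, hNg, hMg]
    have h3 : m_e • (Sᴴ * K⁻¹).mulVec g - t • (Sᴴ * K⁻¹ * S).mulVec g + t • B.mulVec g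
        = m_e • (Sᴴ * K⁻¹).mulVec g + (t • B.mulVec g - t • (Sᴴ * K⁻¹ * S).mulVec g) := by abel
    rw [h3, h2]
    abel
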